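/- Let k : ℝⁿ × ℝⁿ → ℝ be a measurable kernel for which there exist C, δ > 0 such that |k(x,y) − k(x',y)| ≤ C·|x − x'|^δ / |x − y|^{n+δ} whenever x, x' ∈ Q and y ∈ (2Q)^c for some cube Q. Let T be a linear operator on integrable functions such that: (1) T is of weak type (1,1); and (2) whenever g is integrable and x lies outside the support of g, Tg(x) = ∫ k(x,y) g(y) dy. Then for every 0 < s ≤ 1/2 there is a constant c (depending on n, δ, s and the constants of T) such that for every integrable f and every x ∈ ℝⁿ, M♯_{0,s}(Tf)(x) ≤ c · Mf(x). -/

import Mathlib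

open MeasureTheory ENNReal

namespace LocalMedian

/-- Euclidean space `ℝⁿ`. -/
abbrev Sp (n : ℕ) := EuclideanSpace ℝ (Fin n)

/-- An axis-parallel cube in `ℝⁿ`, given by its lower corner and (positive) sidelength. -/
structure Cube (n : ℕ) where
  corner : Sp n
  side : ℝ
  side_pos : 0 < side

namespace Cube

variable {n : ℕ}

/-- The set of points of the cube. -/
def set (Q : Cube n) : Set (Sp n) :=
  {x | ∀ i, Q.corner i ≤ x i ∧ x i ≤ Q.corner i + Q.side}

/-- The center of the cube. -/
noncomputable def center (Q : Cube n) : Sp n := WithLp.toLp 2 (fun i => Q.corner i + Q.side / 2)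

/-- The cube concentric with `Q` whose sidelength is `r` times that of `Q`. -/
noncomputable def dilate (Q : Cube n) (r : ℝ) (hr : 0 < r) : Cube n where
  corner := WithLp.toLp 2 (fun i => Q.center i - r * Q.side / 2)
  side := r * Q.side
  side_pos := mul_pos hr Q.side_pos

/-- `Q` is a dyadic subcube of `Q₀`, i.e. obtained from `Q₀` by repeated dyadic
subdivision into `2ⁿ` congruent subcubes. -/
def dyadicSub (Q₀ Q : Cube n) : Prop :=
  ∃ (k : ℕ) (m : Fin n → ℕ), (∀ i, m i < 2 ^ k) ∧
    Q.side = Q₀.side / 2 ^ k ∧ ∀ i, Q.corner i = Q₀.corner i + Q.side * m i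

/-- `Q` is one of the `2ⁿ` dyadic children of `P` (so `P` is the dyadic parent of `Q`). -/
def isDyadicChild (Q P : Cube n) : Prop :=
  Q.side = P.side / 2 ∧ ∃ m : Fin n → ℕ, (∀ i, m i < 2) ∧
    ∀ i, Q.corner i = P.corner i + Q.side * m i

end Cube

variable {n : ℕ}

/-- The (maximal) median of `f` over the cube `Q` with parameter `t`:
`m_f(t,Q) = sup { M : |{y ∈ Q : f y < M}| ≤ t|Q| }`. -/
noncomputable def median (f : Sp n → ℝ) (t : ℝ) (Q : Cube n) : ℝ :=
  sSup {M : ℝ | volume {y ∈ Q.set | f y < M} ≤ ENNReal.ofReal t * volume Q.set}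

/-- The local oscillation `inf_c inf {α ≥ 0 : |{y ∈ Q : |f y - c| > α}| < s|Q|}`. -/
noncomputable def osc (f : Sp n → ℝ) (s : ℝ) (Q : Cube n) : ℝ :=
  ⨅ c : ℝ, sInf {α : ℝ | 0 ≤ α ∧
    volume {y ∈ Q.set | α < |f y - c|} < ENNReal.ofReal s * volume Q.set}

/-- The local sharp maximal function `M♯_{0,s,Q₀} f`, restricted to the cube `Q₀`. -/
noncomputable def sharpLoc (f : Sp n → ℝ) (s : ℝ) (Q₀ : Cube n) (x : Sp n) : ℝ≥0∞ :=
  ⨆ Q : {Q : Cube n // x ∈ Q.set ∧ Q.set ⊆ Q₀.set}, ENNReal.ofReal (osc f s Q.1)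

/-- The local sharp maximal function `M♯_{0,s} f` (over all cubes containing `x`). -/
noncomputable def sharp (f : Sp n → ℝ) (s : ℝ) (x : Sp n) : ℝ≥0∞ :=
  ⨆ Q : {Q : Cube n // x ∈ Q.set}, ENNReal.ofReal (osc f s Q.1)

/-- The Hardy–Littlewood maximal function (over cubes containing `x`). -/
noncomputable def maximal (f : Sp n → ℝ) (x : Sp n) : ℝ≥0∞ :=
  ⨆ Q : {Q : Cube n // x ∈ Q.set},
    (∫⁻ y in Q.1.set, ENNReal.ofReal |f y|) / volume Q.1.set

/-- The Hardy–Littlewood maximal function of an `ℝ≥0∞`-valued function. -/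
noncomputable def maximalE (g : Sp n → ℝ≥0∞) (x : Sp n) : ℝ≥0∞ :=
  ⨆ Q : {Q : Cube n // x ∈ Q.set}, (∫⁻ y in Q.1.set, g y) / volume Q.1.set

/-- The average `(1/|Q|) ∫_Q g`. -/
noncomputable def cubeAvg (g : Sp n → ℝ) (Q : Cube n) : ℝ :=
  (volume Q.set).toReal⁻¹ * ∫ y in Q.set, g y

/-- The Fefferman–Stein sharp maximal function
`M♯ g(x) = sup_{Q ∋ x} (1/|Q|) ∫_Q |g - g_Q|`. -/
noncomputable def fsSharp (g : Sp n → ℝ) (x : Sp n) : ℝ≥0∞ :=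
  ⨆ Q : {Q : Cube n // x ∈ Q.set},
    ENNReal.ofReal (cubeAvg (fun y => |g y - cubeAvg g Q.1|) Q.1)


section Aux

namespace Cube

variable {n : ℕ}

lemma mem_set_iff {Q : Cube n} {z : Sp n} :
    z ∈ Q.set ↔ ∀ i, |z i - Q.center i| ≤ Q.side / 2 := by
  unfold set center
  simp only [Set.mem_setOf_eq, abs_le, PiLp.toLp_apply]
  exact forall_congr' fun i => by constructor <;> intro h <;> constructor <;> linarith [h.1, h.2]

lemma mem_dilate_iff {Q : Cube n} {r : ℝ} (hr : 0 < r) {z : Sp n} :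
    z ∈ (Q.dilate r hr).set ↔ ∀ i, |z i - Q.center i| ≤ r * Q.side / 2 := by
  unfold set dilate center
  simp only [Set.mem_setOf_eq, abs_le]
  refine forall_congr' fun i => ?_
  constructor <;> intro h <;> constructor <;>
    linarith [h.1, h.2]

lemma measurableSet_set (Q : Cube n) : MeasurableSet Q.set := by
  have : Q.set = ⋂ i, (fun z : Sp n => z i) ⁻¹' Set.Icc (Q.corner i) (Q.corner i + Q.side) := by
    ext z; simp [set, Set.mem_iInter, Set.mem_Icc]
  rw [this]
  exact MeasurableSet.iInter fun i =>
    ((EuclideanSpace.proj (𝕜 := ℝ) i).continuous.measurable) measurableSet_Icc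

lemma volume_set (Q : Cube n) : volume Q.set = ENNReal.ofReal (Q.side ^ n) := by
  have he : Q.set = (MeasurableEquiv.toLp 2 (Fin n → ℝ)).symm ⁻¹'
      (Set.univ.pi fun i => Set.Icc (Q.corner i) (Q.corner i + Q.side)) := by
    ext z; simp [set, Set.mem_univ_pi, Set.mem_Icc, MeasurableEquiv.toLp, Pi.le_def]
    exact forall_and
  rw [he, (EuclideanSpace.volume_preserving_symm_measurableEquiv_toLp (Fin n)).measure_preimage
    (by measurability), volume_pi_pi]
  simp [Real.volume_Icc, Finset.prod_const, ← ENNReal.ofReal_pow Q.side_pos.le]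

lemma subset_dilate (Q : Cube n) {r : ℝ} (hr : 0 < r) (hr1 : 1 ≤ r) :
    Q.set ⊆ (Q.dilate r hr).set := fun z hz => by
  rw [mem_dilate_iff hr]
  intro i
  have := mem_set_iff.mp hz i
  nlinarith [Q.side_pos, this]

lemma dilate_subset_dilate (Q : Cube n) {r r' : ℝ} (hr : 0 < r) (hr' : 0 < r') (h : r ≤ r') :
    (Q.dilate r hr).set ⊆ (Q.dilate r' hr').set := fun z hz => by
  rw [mem_dilate_iff hr']
  intro i
  have := (mem_dilate_iff hr).mp hz i
  nlinarith [Q.side_pos]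

lemma subset_interior_dilate (Q : Cube n) {r : ℝ} (hr : 0 < r) (hr1 : 1 < r) :
    Q.set ⊆ interior (Q.dilate r hr).set := by
  set B : Set (Sp n) := ⋂ i, (fun z : Sp n => z i - Q.center i) ⁻¹'
    Set.Ioo (-(r * Q.side / 2)) (r * Q.side / 2) with hB
  have hBopen : IsOpen B :=
    isOpen_iInter_of_finite fun i => IsOpen.preimage
      (((EuclideanSpace.proj (𝕜 := ℝ) i).continuous).sub continuous_const) isOpen_Ioo
  have hBsub : B ⊆ (Q.dilate r hr).set := fun z hz => by
    rw [mem_dilate_iff hr]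
    intro i
    have := Set.mem_iInter.mp hz i
    simp only [Set.mem_preimage, Set.mem_Ioo] at this
    rw [abs_le]; exact ⟨this.1.le, this.2.le⟩
  refine fun z hz => interior_maximal hBsub hBopen ?_
  refine Set.mem_iInter.mpr fun i => ?_
  have := mem_set_iff.mp hz i
  rw [abs_le] at this
  simp only [Set.mem_preimage, Set.mem_Ioo]
  constructor <;> nlinarith [Q.side_pos, this.1, this.2]

lemma compl_dilate_subset_iUnion (Q : Cube n) :
    ((Q.dilate 2 (by norm_num)).set)ᶜ ⊆
      ⋃ j : ℕ, ((Q.dilate (2 ^ (j + 2)) (by positivity)).set \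
        (Q.dilate (2 ^ (j + 1)) (by positivity)).set) := by
  intro z hz
  classical
  have hex : ∃ j : ℕ, z ∈ (Q.dilate (2 ^ (j + 2)) (by positivity)).set := by
    obtain ⟨b, hb⟩ : ∃ b : ℝ, ∀ i, |z i - Q.center i| ≤ b := by
      rcases Finset.exists_le (Finset.univ.image (fun i : Fin n => |z i - Q.center i|)) with ⟨b, hb⟩
      exact ⟨b, fun i => hb _ (Finset.mem_image_of_mem _ (Finset.mem_univ i))⟩
    obtain ⟨j, hj⟩ := pow_unbounded_of_one_lt (b * 2 / Q.side) (by norm_num : (1:ℝ) < 2)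
    refine ⟨j, (mem_dilate_iff _).mpr fun i => ?_⟩
    have h1 : (2:ℝ) ^ j ≤ 2 ^ (j + 2) := pow_le_pow_right₀ (by norm_num) (by omega)
    have hs := Q.side_pos
    have h2 : b * 2 / Q.side ≤ 2 ^ (j + 2) := le_trans hj.le h1
    have h3 : b ≤ 2 ^ (j + 2) * Q.side / 2 := by
      rw [div_le_iff₀ hs] at h2; linarith
    exact le_trans (hb i) h3
  set J := Nat.find hex with hJ
  have hJ2 : z ∈ (Q.dilate (2 ^ (J + 2)) (by positivity)).set := Nat.find_spec hex
  refine Set.mem_iUnion.mpr ⟨J, hJ2, ?_⟩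
  cases' Nat.eq_zero_or_pos J with h0 hpos
  · rw [h0]
    intro hmem
    exact hz (by simpa using hmem)
  · intro hmem
    have hmin := Nat.find_min hex (m := J - 1) (by omega)
    apply hmin
    have he : J - 1 + 2 = J + 1 := by omega
    rw [he]
    exact hmem

end Cube

lemma abs_coord_le_norm (z : Sp n) (i : Fin n) : |z i| ≤ ‖z‖ := by
  rw [EuclideanSpace.norm_eq]
  have h1 : |z i| = Real.sqrt (‖z i‖ ^ 2) := by
    rw [Real.sqrt_sq_eq_abs]; simp
  rw [h1]
  apply Real.sqrt_le_sqrt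
  exact Finset.single_le_sum (f := fun j => ‖z j‖ ^ 2) (fun j _ => by positivity) (Finset.mem_univ i)

lemma norm_le_card_mul {z : Sp n} {b : ℝ} (hb : 0 ≤ b) (h : ∀ i, |z i| ≤ b) :
    ‖z‖ ≤ ((n : ℝ) + 1) * b := by
  rw [EuclideanSpace.norm_eq]
  have hsum : ∑ i : Fin n, ‖z i‖ ^ 2 ≤ n * b ^ 2 := by
    calc ∑ i : Fin n, ‖z i‖ ^ 2 ≤ ∑ _i : Fin n, b ^ 2 := by
          refine Finset.sum_le_sum fun i _ => ?_
          have h2 : ‖z i‖ ≤ b := by simpa using h i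
          nlinarith [norm_nonneg (z i)]
      _ = n * b ^ 2 := by simp [Finset.sum_const, mul_comm]
  calc Real.sqrt (∑ i : Fin n, ‖z i‖ ^ 2) ≤ Real.sqrt (((n:ℝ) + 1) ^ 2 * b ^ 2) := by
        apply Real.sqrt_le_sqrt
        nlinarith [Nat.cast_nonneg (α := ℝ) n, sq_nonneg b,
          mul_nonneg (mul_nonneg (Nat.cast_nonneg (α := ℝ) n) (Nat.cast_nonneg (α := ℝ) n))
            (sq_nonneg b), mul_nonneg (Nat.cast_nonneg (α := ℝ) n) (sq_nonneg b)]
    _ = ((n : ℝ) + 1) * b := by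
        rw [Real.sqrt_mul (by positivity), Real.sqrt_sq (by positivity), Real.sqrt_sq hb]

lemma annuli_const {p δ b s : ℝ} (hδ : 0 < δ) (hb : 0 < b) (hs : 0 < s) (j : ℕ) :
    (b * s) ^ δ * ((2:ℝ) ^ (j + 2) * s) ^ p / ((2:ℝ) ^ j * s / 2) ^ (p + δ) =
      b ^ δ * (2:ℝ) ^ (3 * p + δ) * ((2:ℝ) ^ (-δ)) ^ j := by
  have hbs : (0:ℝ) < b * s := mul_pos hb hs
  have h2j : (0:ℝ) < (2:ℝ) ^ (j+2) := by positivity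
  have h2j' : (0:ℝ) < (2:ℝ) ^ j * s / 2 := by positivity
  have hL : (0:ℝ) <  (b * s) ^ δ * ((2:ℝ) ^ (j + 2) * s) ^ p / ((2:ℝ) ^ j * s / 2) ^ (p + δ) := by
    positivity
  have hR : (0:ℝ) < b ^ δ * (2:ℝ) ^ (3 * p + δ) * ((2:ℝ) ^ (-δ)) ^ j := by positivity
  rw [← Real.exp_log hL, ← Real.exp_log hR]
  congr 1
  rw [Real.log_div (by positivity) (by positivity), Real.log_mul (by positivity) (by positivity),
    Real.log_rpow hbs, Real.log_rpow (by positivity), Real.log_rpow h2j',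
    Real.log_mul hb.ne' hs.ne', Real.log_mul h2j.ne' hs.ne',
    Real.log_div (by positivity : ((2:ℝ)^j*s) ≠ 0) (by norm_num : ((2:ℝ)) ≠ 0),
    Real.log_mul (by positivity : ((2:ℝ)^j) ≠ 0) hs.ne',
    Real.log_mul (by positivity : (b^δ*(2:ℝ)^(3*p+δ)) ≠ 0) (by positivity : (((2:ℝ)^(-δ):ℝ)^j) ≠ 0),
    Real.log_mul (by positivity : (b^δ:ℝ) ≠ 0) (by positivity : ((2:ℝ)^(3*p+δ):ℝ) ≠ 0),
    Real.log_pow, Real.log_pow, Real.log_pow,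
    Real.log_rpow hb, Real.log_rpow (by norm_num : (0:ℝ) < 2),
    Real.log_rpow (by norm_num : (0:ℝ) < 2)]
  push_cast
  ring

end Aux


set_option maxHeartbeats 2000000 in
/-- Under the hypotheses of Statement 4, for every `0 < s ≤ 1/2` there
is `c > 0` such that for every integrable `f` and every `x ∈ ℝⁿ`:
`M♯_{0,s}(Tf)(x) ≤ c · Mf(x)`. -/
theorem statement6 {n : ℕ} (k : Sp n → Sp n → ℝ)
    (hkm : Measurable (Function.uncurry k)) (C δ : ℝ) (hC : 0 < C) (hδ : 0 < δ)
    (hker : ∀ (Q : Cube n), ∀ x ∈ Q.set, ∀ x' ∈ Q.set,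
      ∀ y ∉ (Q.dilate 2 (by norm_num)).set,
        |k x y - k x' y| ≤ C * ‖x - x'‖ ^ δ / ‖x - y‖ ^ ((n : ℝ) + δ))
    (T : (Sp n → ℝ) → (Sp n → ℝ))
    (hadd : ∀ g₁ g₂ : Sp n → ℝ, Integrable g₁ → Integrable g₂ → T (g₁ + g₂) = T g₁ + T g₂)
    (hsmul : ∀ (a : ℝ) (g : Sp n → ℝ), Integrable g → T (a • g) = a • T g)
    (CT : ℝ)
    (hT1 : ∀ g : Sp n → ℝ, Integrable g → ∀ lam : ℝ, 0 < lam →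
      volume {x | ENNReal.ofReal lam < ENNReal.ofReal |T g x|}
        ≤ ENNReal.ofReal CT * (∫⁻ x, ENNReal.ofReal |g x|) / ENNReal.ofReal lam)
    (hT2 : ∀ g : Sp n → ℝ, Integrable g → ∀ x ∉ tsupport g, T g x = ∫ y, k x y * g y)
    (s : ℝ) (hs0 : 0 < s) (hs : s ≤ 1 / 2) :
    ∃ c : ℝ, 0 < c ∧
      ∀ f : Sp n → ℝ, Integrable f → ∀ x : Sp n,
        sharp (T f) s x ≤ ENNReal.ofReal c * maximal f x := by
  classical
  set CT' : ℝ := max CT 1 with hCT'def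
  have hCT'1 : (1:ℝ) ≤ CT' := le_max_right _ _
  have hCT'0 : (0:ℝ) < CT' := lt_of_lt_of_le one_pos hCT'1
  set r : ℝ := (2:ℝ) ^ (-δ) with hrdef
  have hr0 : 0 < r := Real.rpow_pos_of_pos two_pos _
  have hr1 : r < 1 := Real.rpow_lt_one_of_one_lt_of_neg one_lt_two (by linarith)
  set K : ℝ := C * ((n:ℝ) + 1) ^ δ * (2:ℝ) ^ (3 * (n:ℝ) + δ) with hKdef
  have hK0 : 0 < K :=
    mul_pos (mul_pos hC (Real.rpow_pos_of_pos (by positivity) _)) (Real.rpow_pos_of_pos two_pos _)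
  set A : ℝ := K * (1 - r)⁻¹ with hAdef
  have hA0 : 0 < A := by
    apply mul_pos hK0
    rw [inv_pos]; linarith
  refine ⟨2 ^ (n+1) * CT' / s + A,
    add_pos (div_pos (mul_pos (by positivity) hCT'0) hs0) hA0, ?_⟩
  intro f hf x
  refine iSup_le ?_
  intro QQ
  obtain ⟨Q, hxQ⟩ := QQ
  show ENNReal.ofReal (osc (T f) s Q) ≤ _
  have hQside := Q.side_pos
  have hvolQ0 : volume Q.set ≠ 0 := by
    rw [Q.volume_set]
    simp only [ne_eq, ENNReal.ofReal_eq_zero, not_le]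
    exact pow_pos hQside n
  -- bounding osc by an explicit admissible (c₀, α₀)
  have hbddR : BddBelow (Set.range fun c : ℝ => sInf {α : ℝ | 0 ≤ α ∧
      volume {y ∈ Q.set | α < |T f y - c|} < ENNReal.ofReal s * volume Q.set}) := by
    refine ⟨0, ?_⟩
    rintro v ⟨c, rfl⟩
    exact Real.sInf_nonneg fun a ha => ha.1
  have hoscle : ∀ c₀ α₀ : ℝ, 0 ≤ α₀ →
      volume {y ∈ Q.set | α₀ < |T f y - c₀|} < ENNReal.ofReal s * volume Q.set →
      osc (T f) s Q ≤ α₀ := by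
    intro c₀ α₀ h0 hv
    have hrfl : osc (T f) s Q = ⨅ c : ℝ, sInf {α : ℝ | 0 ≤ α ∧
        volume {y ∈ Q.set | α < |T f y - c|} < ENNReal.ofReal s * volume Q.set} := rfl
    rw [hrfl]
    exact le_trans (ciInf_le hbddR c₀) (csInf_le ⟨0, fun a ha => ha.1⟩ ⟨h0, hv⟩)
  -- maximal function facts
  have hmax : ∀ (R : Cube n), x ∈ R.set →
      (∫⁻ z in R.set, ENNReal.ofReal |f z|) ≤ maximal f x * volume R.set := by
    intro R hxR
    have hv0 : volume R.set ≠ 0 := by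
      rw [R.volume_set]
      simp only [ne_eq, ENNReal.ofReal_eq_zero, not_le]
      exact pow_pos R.side_pos n
    have hvt : volume R.set ≠ ⊤ := by rw [R.volume_set]; exact ENNReal.ofReal_ne_top
    have h1 : (∫⁻ z in R.set, ENNReal.ofReal |f z|) / volume R.set ≤ maximal f x :=
      le_iSup (fun P : {P : Cube n // x ∈ P.set} =>
        (∫⁻ z in P.1.set, ENNReal.ofReal |f z|) / volume P.1.set) ⟨R, hxR⟩
    calc (∫⁻ z in R.set, ENNReal.ofReal |f z|)
        = (∫⁻ z in R.set, ENNReal.ofReal |f z|) / volume R.set * volume R.set :=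
          (ENNReal.div_mul_cancel hv0 hvt).symm
      _ ≤ maximal f x * volume R.set := mul_le_mul_left h1 _
  by_cases hmtop : maximal f x = ⊤
  · rw [hmtop, ENNReal.mul_top (by
      simp only [ne_eq, ENNReal.ofReal_eq_zero, not_le]
      exact add_pos (div_pos (mul_pos (by positivity) hCT'0) hs0) hA0)]
    exact le_top
  by_cases hm0 : maximal f x = 0
  · -- trivial case : f = 0 a.e.
    have hfzero : (∫⁻ z, ENNReal.ofReal |f z|) = 0 := by
      refine le_antisymm ?_ zero_le
      set Qb : ℕ → Cube n := fun j =>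
        ⟨WithLp.toLp 2 (fun i => x i - ((j:ℝ) + 1)), 2 * ((j:ℝ) + 1), by positivity⟩ with hQbdef
      have hxQb : ∀ j : ℕ, x ∈ (Qb j).set := by
        intro j i
        have hj : (0:ℝ) ≤ (j:ℝ) := Nat.cast_nonneg j
        constructor
        · show x i - ((j:ℝ) + 1) ≤ x i
          linarith
        · show x i ≤ x i - ((j:ℝ) + 1) + 2 * ((j:ℝ) + 1)
          linarith
      have hcover : (Set.univ : Set (Sp n)) ⊆ ⋃ j : ℕ, (Qb j).set := by
        intro z _
        obtain ⟨b, hb⟩ : ∃ b : ℝ, ∀ i, |z i - x i| ≤ b := by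
          rcases Finset.exists_le (Finset.univ.image (fun i : Fin n => |z i - x i|)) with ⟨b, hb⟩
          exact ⟨b, fun i => hb _ (Finset.mem_image_of_mem _ (Finset.mem_univ i))⟩
        obtain ⟨j, hj⟩ := exists_nat_ge b
        refine Set.mem_iUnion.mpr ⟨j, fun i => ?_⟩
        have h1 := hb i
        rw [abs_le] at h1
        constructor
        · show x i - ((j:ℝ) + 1) ≤ z i
          linarith [h1.1, h1.2]
        · show z i ≤ x i - ((j:ℝ) + 1) + 2 * ((j:ℝ) + 1)
          linarith [h1.1, h1.2]
      have h0 : ∀ j : ℕ, (∫⁻ z in (Qb j).set, ENNReal.ofReal |f z|) = 0 := by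
        intro j
        have h1 := hmax (Qb j) (hxQb j)
        rw [hm0, zero_mul] at h1
        exact le_antisymm h1 zero_le
      calc (∫⁻ z, ENNReal.ofReal |f z|)
          = ∫⁻ z in Set.univ, ENNReal.ofReal |f z| := (setLIntegral_univ _).symm
        _ ≤ ∫⁻ z in ⋃ j : ℕ, (Qb j).set, ENNReal.ofReal |f z| := lintegral_mono_set hcover
        _ ≤ ∑' j : ℕ, ∫⁻ z in (Qb j).set, ENNReal.ofReal |f z| := lintegral_iUnion_le _ _
        _ ≤ 0 := by simp [h0]
    have hTf0 : volume {z | T f z ≠ 0} = 0 := by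
      have hN : ∀ j : ℕ, volume
          {z | ENNReal.ofReal (1/((j:ℝ)+1)) < ENNReal.ofReal |T f z|} = 0 := by
        intro j
        have h1 := hT1 f hf (1/((j:ℝ)+1)) (by positivity)
        rw [hfzero, mul_zero, ENNReal.zero_div] at h1
        exact le_antisymm h1 zero_le
      have hsub : {z | T f z ≠ 0} ⊆
          ⋃ j : ℕ, {z | ENNReal.ofReal (1/((j:ℝ)+1)) < ENNReal.ofReal |T f z|} := by
        intro z hz
        have habs : 0 < |T f z| := abs_pos.mpr hz
        obtain ⟨j, hj⟩ := exists_nat_one_div_lt habs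
        exact Set.mem_iUnion.mpr ⟨j, (ENNReal.ofReal_lt_ofReal_iff habs).mpr hj⟩
      exact measure_mono_null hsub (measure_iUnion_null hN)
    have hmem : volume {y ∈ Q.set | (0:ℝ) < |T f y - 0|} < ENNReal.ofReal s * volume Q.set := by
      have hsub : {y ∈ Q.set | (0:ℝ) < |T f y - 0|} ⊆ {z | T f z ≠ 0} := by
        intro z hz
        have h2 := hz.2
        rw [sub_zero] at h2
        exact abs_pos.mp h2
      rw [measure_mono_null hsub hTf0]
      refine ENNReal.mul_pos ?_ hvolQ0
      simp only [ne_eq, ENNReal.ofReal_eq_zero, not_le]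
      exact hs0
    have hosc0 := hoscle 0 0 le_rfl hmem
    calc ENNReal.ofReal (osc (T f) s Q) ≤ ENNReal.ofReal 0 := ENNReal.ofReal_le_ofReal hosc0
      _ = 0 := ENNReal.ofReal_zero
      _ ≤ _ := zero_le
  -- main case
  set m : ℝ := (maximal f x).toReal with hmdef
  have hm : 0 < m := ENNReal.toReal_pos hm0 hmtop
  have hmax' : maximal f x = ENNReal.ofReal m := (ENNReal.ofReal_toReal hmtop).symm
  set S2 : Cube n := Q.dilate 2 (by norm_num) with hS2def
  have hS2side : S2.side = 2 * Q.side := rfl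
  set f₁ : Sp n → ℝ := (S2.set).indicator f with hf1def
  set f₂ : Sp n → ℝ := ((S2.set)ᶜ).indicator f with hf2def
  have hf1 : Integrable f₁ := hf.indicator (Cube.measurableSet_set S2)
  have hf2 : Integrable f₂ := hf.indicator (Cube.measurableSet_set S2).compl
  have hsum : f = f₁ + f₂ := by
    rw [hf1def, hf2def]
    exact (Set.indicator_self_add_compl S2.set f).symm
  have hsplit : T f = T f₁ + T f₂ := by
    conv_lhs => rw [hsum]
    exact hadd f₁ f₂ hf1 hf2
  set x₀ : Sp n := Q.corner with hx0def
  have hx₀ : x₀ ∈ Q.set := fun i => ⟨le_rfl, le_add_of_nonneg_right hQside.le⟩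
  have hnotsupp : ∀ y ∈ Q.set, y ∉ tsupport f₂ := by
    intro y hy hmem
    have h1 : tsupport f₂ ⊆ (interior S2.set)ᶜ := by
      rw [hf2def]
      calc tsupport (((S2.set)ᶜ).indicator f) ⊆ closure ((S2.set)ᶜ) :=
            closure_mono Set.support_indicator_subset
        _ = (interior S2.set)ᶜ := closure_compl
    exact h1 hmem (Q.subset_interior_dilate (by norm_num) (by norm_num) hy)
  have hrep : ∀ y ∈ Q.set, T f₂ y = ∫ z, k y z * f₂ z := fun y hy =>
    hT2 f₂ hf2 y (hnotsupp y hy)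
  -- kernel oscillation bound
  have hosc2 : ∀ y ∈ Q.set, |T f₂ y - T f₂ x₀| ≤ A * m := by
    intro y hy
    set h : Sp n → ℝ := fun z => (k y z - k x₀ z) * f₂ z with hhdef
    have hann : ∀ j : ℕ,
        (∫⁻ z in (Q.dilate (2 ^ (j + 2)) (by positivity)).set \
          (Q.dilate (2 ^ (j + 1)) (by positivity)).set, ENNReal.ofReal ‖h z‖) ≤
        ENNReal.ofReal (K * m * r ^ j) := by
      intro j
      set Kj : ℝ := C * (((n:ℝ) + 1) * Q.side) ^ δ / ((2:ℝ) ^ j * Q.side / 2) ^ ((n:ℝ) + δ)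
        with hKjdef
      have hKj0 : 0 ≤ Kj := by
        apply div_nonneg (mul_nonneg hC.le (Real.rpow_nonneg (by positivity) _))
        exact Real.rpow_nonneg (by positivity) _
      have hptw : ∀ z ∈ (Q.dilate (2 ^ (j + 2)) (by positivity)).set \
          (Q.dilate (2 ^ (j + 1)) (by positivity)).set,
          ENNReal.ofReal ‖h z‖ ≤ ENNReal.ofReal Kj * ENNReal.ofReal |f z| := by
        rintro z ⟨hz2, hz1⟩
        have hzout : z ∉ S2.set := fun hmem => hz1
          (Q.dilate_subset_dilate (by norm_num) (by positivity)
            (by calc (2:ℝ) = 2^1 := by norm_num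
                  _ ≤ 2^(j+1) := pow_le_pow_right₀ one_le_two (by omega)) hmem)
        have hker' := hker Q y hy x₀ hx₀ z hzout
        have hb1 : ‖y - x₀‖ ≤ ((n:ℝ) + 1) * Q.side := by
          apply norm_le_card_mul hQside.le
          intro i
          have hyi := hy i
          have hcoord : (y - x₀) i = y i - Q.corner i := rfl
          rw [hcoord, abs_le]
          exact ⟨by linarith [hyi.1], by linarith [hyi.2]⟩
        have hb2 : (2:ℝ) ^ j * Q.side / 2 ≤ ‖y - z‖ := by
          rw [Cube.mem_dilate_iff (by positivity)] at hz1
          push_neg at hz1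
          obtain ⟨i, hi⟩ := hz1
          have hyc : |y i - Q.center i| ≤ Q.side / 2 := Cube.mem_set_iff.mp hy i
          have htri : |z i - Q.center i| - |y i - Q.center i| ≤
              |(z i - Q.center i) - (y i - Q.center i)| := abs_sub_abs_le_abs_sub _ _
          have h3 : (z i - Q.center i) - (y i - Q.center i) = z i - y i := by ring
          rw [h3] at htri
          have hcoord := abs_coord_le_norm (y - z) i
          have hc2 : (y - z) i = y i - z i := rfl
          rw [hc2, abs_sub_comm] at hcoord
          have hone : (1:ℝ) ≤ 2 ^ j := one_le_pow₀ one_le_two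
          have hstep : (2:ℝ)^(j+1) = 2 * 2^j := by ring
          nlinarith [hQside]
        have hkb : |k y z - k x₀ z| ≤ Kj := by
          refine le_trans hker' ?_
          rw [hKjdef]
          apply div_le_div₀ (mul_nonneg hC.le (Real.rpow_nonneg (by positivity) _))
          · exact mul_le_mul_of_nonneg_left
              (Real.rpow_le_rpow (norm_nonneg _) hb1 hδ.le) hC.le
          · positivity
          · exact Real.rpow_le_rpow (by positivity) hb2 (by positivity)
        have hfz : |f₂ z| ≤ |f z| := by
          rw [hf2def]
          by_cases hzz : z ∈ (S2.set)ᶜ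
          · rw [Set.indicator_of_mem hzz]
          · rw [Set.indicator_of_notMem hzz]
            simp [abs_nonneg]
        have hnh : ‖h z‖ ≤ Kj * |f z| := by
          rw [hhdef]
          simp only [Real.norm_eq_abs, abs_mul]
          exact mul_le_mul hkb hfz (abs_nonneg _) hKj0
        calc ENNReal.ofReal ‖h z‖ ≤ ENNReal.ofReal (Kj * |f z|) :=
              ENNReal.ofReal_le_ofReal hnh
          _ = ENNReal.ofReal Kj * ENNReal.ofReal |f z| := ENNReal.ofReal_mul hKj0
      have hAmeas : MeasurableSet ((Q.dilate (2 ^ (j + 2)) (by positivity)).set \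
          (Q.dilate (2 ^ (j + 1)) (by positivity)).set) :=
        (Cube.measurableSet_set _).diff (Cube.measurableSet_set _)
      have hxD : x ∈ (Q.dilate (2 ^ (j + 2)) (by positivity)).set :=
        Q.subset_dilate (by positivity) (one_le_pow₀ one_le_two) hxQ
      have hvolD : volume (Q.dilate (2 ^ (j + 2)) (by positivity : (0:ℝ) < 2 ^ (j+2))).set =
          ENNReal.ofReal ((2 ^ (j + 2) * Q.side) ^ n) := Cube.volume_set _
      calc (∫⁻ z in (Q.dilate (2 ^ (j + 2)) (by positivity)).set \
            (Q.dilate (2 ^ (j + 1)) (by positivity)).set, ENNReal.ofReal ‖h z‖)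
          ≤ ∫⁻ z in (Q.dilate (2 ^ (j + 2)) (by positivity)).set \
            (Q.dilate (2 ^ (j + 1)) (by positivity)).set,
              ENNReal.ofReal Kj * ENNReal.ofReal |f z| := setLIntegral_mono' hAmeas hptw
        _ = ENNReal.ofReal Kj * ∫⁻ z in (Q.dilate (2 ^ (j + 2)) (by positivity)).set \
            (Q.dilate (2 ^ (j + 1)) (by positivity)).set, ENNReal.ofReal |f z| :=
            lintegral_const_mul' _ _ ENNReal.ofReal_ne_top
        _ ≤ ENNReal.ofReal Kj *
            ∫⁻ z in (Q.dilate (2 ^ (j + 2)) (by positivity)).set, ENNReal.ofReal |f z| :=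
            mul_le_mul_right (lintegral_mono_set Set.diff_subset) _
        _ ≤ ENNReal.ofReal Kj *
            (maximal f x * volume (Q.dilate (2 ^ (j + 2)) (by positivity)).set) :=
            mul_le_mul_right (hmax _ hxD) _
        _ = ENNReal.ofReal (Kj * (m * (2 ^ (j + 2) * Q.side) ^ n)) := by
            rw [hmax', hvolD, ← ENNReal.ofReal_mul hm.le, ← ENNReal.ofReal_mul hKj0]
        _ ≤ ENNReal.ofReal (K * m * r ^ j) := by
            apply ENNReal.ofReal_le_ofReal
            apply le_of_eq
            rw [hKjdef, ← Real.rpow_natCast (2 ^ (j + 2) * Q.side) n, hKdef, hrdef]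
            have hid := annuli_const (p := (n:ℝ)) hδ
              (by positivity : (0:ℝ) < (n:ℝ) + 1) hQside j
            linear_combination (C * m) * hid
    have hptw0 : ∀ z, ENNReal.ofReal ‖h z‖ ≤
        ((S2.set)ᶜ).indicator (fun z => ENNReal.ofReal ‖h z‖) z := by
      intro z
      by_cases hz : z ∈ (S2.set)ᶜ
      · rw [Set.indicator_of_mem hz]
      · rw [Set.indicator_of_notMem hz]
        have hz0 : f₂ z = 0 := by
          rw [hf2def]
          exact Set.indicator_of_notMem hz _
        simp [hhdef, hz0]
    have hgeo : ∑' j : ℕ, ENNReal.ofReal (K * m * r ^ j) = ENNReal.ofReal (A * m) := by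
      have hsm : Summable (fun j : ℕ => K * m * r ^ j) :=
        (summable_geometric_of_lt_one hr0.le hr1).mul_left _
      rw [← ENNReal.ofReal_tsum_of_nonneg
        (fun j => by positivity) hsm]
      congr 1
      rw [tsum_mul_left, tsum_geometric_of_lt_one hr0.le hr1, hAdef]
      ring
    have hlint : (∫⁻ z, ENNReal.ofReal ‖h z‖) ≤ ENNReal.ofReal (A * m) := by
      calc (∫⁻ z, ENNReal.ofReal ‖h z‖)
          ≤ ∫⁻ z, ((S2.set)ᶜ).indicator (fun z => ENNReal.ofReal ‖h z‖) z :=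
            lintegral_mono hptw0
        _ = ∫⁻ z in (S2.set)ᶜ, ENNReal.ofReal ‖h z‖ :=
            lintegral_indicator (Cube.measurableSet_set S2).compl _
        _ ≤ ∫⁻ z in ⋃ j : ℕ, ((Q.dilate (2 ^ (j + 2)) (by positivity)).set \
            (Q.dilate (2 ^ (j + 1)) (by positivity)).set), ENNReal.ofReal ‖h z‖ :=
            lintegral_mono_set (Cube.compl_dilate_subset_iUnion Q)
        _ ≤ ∑' j : ℕ, ∫⁻ z in (Q.dilate (2 ^ (j + 2)) (by positivity)).set \
            (Q.dilate (2 ^ (j + 1)) (by positivity)).set, ENNReal.ofReal ‖h z‖ :=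
            lintegral_iUnion_le _ _
        _ ≤ ∑' j : ℕ, ENNReal.ofReal (K * m * r ^ j) := ENNReal.tsum_le_tsum hann
        _ = ENNReal.ofReal (A * m) := hgeo
    have hky : Measurable fun z => k y z := hkm.comp measurable_prodMk_left
    have hkx : Measurable fun z => k x₀ z := hkm.comp measurable_prodMk_left
    have hf2m : AEStronglyMeasurable f₂ volume :=
      hf.aestronglyMeasurable.indicator (Cube.measurableSet_set S2).compl
    have hhm : AEStronglyMeasurable h volume :=
      ((hky.sub hkx).aestronglyMeasurable).mul hf2m
    have hhint : Integrable h :=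
      ⟨hhm, (hasFiniteIntegral_iff_norm h).mpr (lt_of_le_of_lt hlint ENNReal.ofReal_lt_top)⟩
    have hAm0 : 0 ≤ A * m := mul_nonneg hA0.le hm.le
    have huy : (fun z => k y z * f₂ z) = (fun z => k x₀ z * f₂ z) + h := by
      funext z
      simp only [hhdef, Pi.add_apply]
      ring
    rw [hrep y hy, hrep x₀ hx₀]
    by_cases hint : Integrable (fun z => k x₀ z * f₂ z)
    · have hsplitint : (∫ z, k y z * f₂ z) = (∫ z, k x₀ z * f₂ z) + ∫ z, h z := by
        rw [huy]
        exact integral_add hint hhint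
      rw [hsplitint, add_sub_cancel_left]
      calc |∫ z, h z| ≤ (∫⁻ z, ENNReal.ofReal ‖h z‖).toReal := by
            simpa using norm_integral_le_lintegral_norm h
        _ ≤ (ENNReal.ofReal (A * m)).toReal :=
            ENNReal.toReal_mono ENNReal.ofReal_ne_top hlint
        _ = A * m := ENNReal.toReal_ofReal hAm0
    · have hnint2 : ¬ Integrable (fun z => k y z * f₂ z) := by
        intro hI
        apply hint
        have hx2 : (fun z => k x₀ z * f₂ z) = (fun z => k y z * f₂ z) - h := by
          funext z
          simp only [hhdef, Pi.sub_apply]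
          ring
        rw [hx2]
        exact hI.sub hhint
      rw [integral_undef hnint2, integral_undef hint, sub_zero, abs_zero]
      exact hAm0
  -- weak (1,1) bound for the local part
  set α₁ : ℝ := 2 ^ (n+1) * CT' * m / s with hα₁def
  have hα₁0 : 0 < α₁ :=
    div_pos (mul_pos (mul_pos (by positivity) hCT'0) hm) hs0
  have hI1 : (∫⁻ z, ENNReal.ofReal |f₁ z|) ≤
      ENNReal.ofReal m * ENNReal.ofReal ((2 * Q.side) ^ n) := by
    have heq : ∀ z, ENNReal.ofReal |f₁ z| =
        (S2.set).indicator (fun z => ENNReal.ofReal |f z|) z := by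
      intro z
      rw [hf1def]
      by_cases hz : z ∈ S2.set
      · rw [Set.indicator_of_mem hz, Set.indicator_of_mem hz]
      · rw [Set.indicator_of_notMem hz, Set.indicator_of_notMem hz]
        simp
    calc (∫⁻ z, ENNReal.ofReal |f₁ z|)
        = ∫⁻ z in S2.set, ENNReal.ofReal |f z| := by
          rw [lintegral_congr heq, lintegral_indicator (Cube.measurableSet_set S2)]
      _ ≤ maximal f x * volume S2.set :=
          hmax S2 (Q.subset_dilate (by norm_num) (by norm_num) hxQ)
      _ = ENNReal.ofReal m * ENNReal.ofReal ((2 * Q.side) ^ n) := by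
          rw [hmax', Cube.volume_set, hS2side]
  have hwk : volume {y ∈ Q.set | α₁ < |T f₁ y|} < ENNReal.ofReal s * volume Q.set := by
    have hsub : {y ∈ Q.set | α₁ < |T f₁ y|} ⊆
        {z | ENNReal.ofReal α₁ < ENNReal.ofReal |T f₁ z|} := by
      intro z hz
      exact (ENNReal.ofReal_lt_ofReal_iff (lt_trans hα₁0 hz.2)).mpr hz.2
    calc volume {y ∈ Q.set | α₁ < |T f₁ y|}
        ≤ volume {z | ENNReal.ofReal α₁ < ENNReal.ofReal |T f₁ z|} := measure_mono hsub
      _ ≤ ENNReal.ofReal CT * (∫⁻ z, ENNReal.ofReal |f₁ z|) / ENNReal.ofReal α₁ :=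
          hT1 f₁ hf1 α₁ hα₁0
      _ ≤ ENNReal.ofReal CT' * (ENNReal.ofReal m * ENNReal.ofReal ((2 * Q.side) ^ n)) /
          ENNReal.ofReal α₁ :=
          ENNReal.div_le_div_right
            (mul_le_mul' (ENNReal.ofReal_le_ofReal (le_max_left _ _)) hI1) _
      _ = ENNReal.ofReal (CT' * (m * (2 * Q.side) ^ n) / α₁) := by
          rw [← ENNReal.ofReal_mul hm.le, ← ENNReal.ofReal_mul hCT'0.le,
            ← ENNReal.ofReal_div_of_pos hα₁0]
      _ = ENNReal.ofReal (s * Q.side ^ n / 2) := by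
          congr 1
          rw [hα₁def]
          field_simp
          ring
      _ < ENNReal.ofReal s * volume Q.set := by
          rw [Q.volume_set, ← ENNReal.ofReal_mul hs0.le]
          apply (ENNReal.ofReal_lt_ofReal_iff (by positivity)).mpr
          nlinarith [pow_pos hQside n, hs0]
  -- combine the two bounds
  have hsub2 : {y ∈ Q.set | α₁ + A * m < |T f y - T f₂ x₀|} ⊆
      {y ∈ Q.set | α₁ < |T f₁ y|} := by
    intro z hz
    obtain ⟨hz1, hz2⟩ := hz
    refine ⟨hz1, ?_⟩
    have hTz : T f z = T f₁ z + T f₂ z := by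
      rw [hsplit]
      rfl
    have h2 := hosc2 z hz1
    have h3 : |T f z - T f₂ x₀| ≤ |T f₁ z| + |T f₂ z - T f₂ x₀| := by
      rw [hTz, add_sub_assoc]
      exact abs_add_le _ _
    linarith
  have hmemS : volume {y ∈ Q.set | α₁ + A * m < |T f y - T f₂ x₀|} <
      ENNReal.ofReal s * volume Q.set :=
    lt_of_le_of_lt (measure_mono hsub2) hwk
  have hosc3 : osc (T f) s Q ≤ α₁ + A * m :=
    hoscle (T f₂ x₀) (α₁ + A * m)
      (add_nonneg hα₁0.le (mul_nonneg hA0.le hm.le)) hmemS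
  have hfinal : α₁ + A * m = (2 ^ (n+1) * CT' / s + A) * m := by
    rw [hα₁def]
    field_simp
  calc ENNReal.ofReal (osc (T f) s Q)
      ≤ ENNReal.ofReal ((2 ^ (n+1) * CT' / s + A) * m) := by
        rw [← hfinal]
        exact ENNReal.ofReal_le_ofReal hosc3
    _ = ENNReal.ofReal (2 ^ (n+1) * CT' / s + A) * ENNReal.ofReal m :=
        ENNReal.ofReal_mul (by positivity)
    _ = ENNReal.ofReal (2 ^ (n+1) * CT' / s + A) * maximal f x := by rw [hmax']


end LocalMedian
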